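/- Let f : ℝ^m → ℝ be C² and fix an exponent α > 0. For x ∈ ℝ^m with ∇f(x) ≠ 0 and δ ∈ ℝ, let A(x, δ) = ∇²f(x) + δ‖∇f(x)‖^α · Id, a self-adjoint linear operator on ℝ^m. Then there exists a set Δ ⊆ ℝ of Lebesgue measure 0 such that for every δ ∈ ℝ \ Δ, the set {x ∈ ℝ^m : ∇f(x) ≠ 0 and A(x, δ) is not invertible} has Lebesgue measure 0. -/

import Mathlib

open Gradient MeasureTheory

/-- Let `f : ℝ^m → ℝ` be `C²` and `α > 0`. For `x` with `∇f(x) ≠ 0` and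
`δ ∈ ℝ` let `A(x, δ) = ∇²f(x) + δ‖∇f(x)‖^α · Id`. Then there is a Lebesgue-null set `Δ ⊆ ℝ`
such that for every `δ ∉ Δ`, the set of `x` with `∇f(x) ≠ 0` and `A(x, δ)` not invertible is
Lebesgue-null. -/
theorem newQNewton_perturbation_generically_invertible
    {m : ℕ} (f : EuclideanSpace ℝ (Fin m) → ℝ) (hf : ContDiff ℝ 2 f)
    (α : ℝ) (hα : 0 < α)
    (A : EuclideanSpace ℝ (Fin m) → ℝ →
      (EuclideanSpace ℝ (Fin m) →L[ℝ] EuclideanSpace ℝ (Fin m)))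
    (hA : ∀ x δ, A x δ = fderiv ℝ (fun y => ∇ f y) x +
      (δ * ‖∇ f x‖ ^ α) • ContinuousLinearMap.id ℝ (EuclideanSpace ℝ (Fin m))) :
    ∃ Δ : Set ℝ, MeasureTheory.volume Δ = 0 ∧
      ∀ δ ∉ Δ, MeasureTheory.volume
        {x : EuclideanSpace ℝ (Fin m) | ∇ f x ≠ 0 ∧ ¬ IsUnit (A x δ)} = 0 := by
  classical
  have hf1 : ContDiff ℝ 1 (fderiv ℝ f) := hf.fderiv_right (by norm_num)
  have hgrad : ContDiff ℝ 1 (∇ f) := by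
    have h := (InnerProductSpace.toDual ℝ
      (EuclideanSpace ℝ (Fin m))).symm.contDiff (n := 1)
    exact h.comp hf1
  have hH : Continuous (fun x => fderiv ℝ (fun y => ∇ f y) x) :=
    (hgrad.fderiv_right (m := 0) (by norm_num)).continuous
  have hgradc : Continuous (∇ f) := hgrad.continuous
  set S : Set (ℝ × EuclideanSpace ℝ (Fin m)) :=
    {p | ∇ f p.2 ≠ 0 ∧ ¬ IsUnit (A p.2 p.1)} with hSdef
  have hgcont : Continuous (fun p : ℝ × EuclideanSpace ℝ (Fin m) => A p.2 p.1) := by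
    simp only [hA]
    apply Continuous.add
    · exact hH.comp continuous_snd
    · refine Continuous.smul (f := fun p : ℝ × EuclideanSpace ℝ (Fin m) => p.1 * ‖∇ f p.2‖ ^ α) ?_ continuous_const
      apply Continuous.mul continuous_fst
      exact ((hgradc.comp continuous_snd).norm).rpow_const (fun p => Or.inr hα.le)
  have hSmeas : MeasurableSet S := by
    have h1 : IsOpen {p : ℝ × EuclideanSpace ℝ (Fin m) | ∇ f p.2 ≠ 0} :=
      isOpen_compl_iff.mpr (isClosed_eq (hgradc.comp continuous_snd) continuous_const)
    have h2 : IsClosed {B : EuclideanSpace ℝ (Fin m) →L[ℝ] EuclideanSpace ℝ (Fin m) |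
        ¬ IsUnit B} := Units.isOpen.isClosed_compl
    exact h1.measurableSet.inter ((h2.preimage hgcont).measurableSet)
  have hsec : ∀ x : EuclideanSpace ℝ (Fin m), volume {δ : ℝ | (δ, x) ∈ S} = 0 := by
    intro x
    by_cases hx : ∇ f x = 0
    · have he : {δ : ℝ | (δ, x) ∈ S} = ∅ := by
        ext δ; simp [hSdef, hx]
      rw [he]; exact measure_empty
    · set c : ℝ := ‖∇ f x‖ ^ α with hc
      have hcpos : 0 < c := Real.rpow_pos_of_pos (norm_pos_iff.mpr hx) α
      set H : EuclideanSpace ℝ (Fin m) →L[ℝ] EuclideanSpace ℝ (Fin m) :=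
        fderiv ℝ (fun y => ∇ f y) x with hHdef
      have hsub : {δ : ℝ | (δ, x) ∈ S} ⊆
          (fun δ : ℝ => -(δ * c)) ⁻¹'
            (spectrum ℝ (H : EuclideanSpace ℝ (Fin m) →ₗ[ℝ] EuclideanSpace ℝ (Fin m))) := by
        intro δ hδ
        obtain ⟨-, hδ2⟩ := hδ
        simp only [Set.mem_preimage]
        rw [spectrum.mem_iff]
        intro hu
        apply hδ2
        rw [hA]
        rw [ContinuousLinearMap.isUnit_iff_bijective]
        have : IsUnit (-(algebraMap ℝ (Module.End ℝ (EuclideanSpace ℝ (Fin m))) (-(δ * c)) -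
            (H : EuclideanSpace ℝ (Fin m) →ₗ[ℝ] EuclideanSpace ℝ (Fin m)))) := hu.neg
        have hb := (Module.End.isUnit_iff _).mp this
        convert hb using 1
        ext v
        simp [Algebra.algebraMap_eq_smul_one, hHdef, hc]
      refine measure_mono_null hsub ?_
      apply Set.Finite.measure_zero
      apply Set.Finite.preimage _ (Module.End.finite_spectrum _)
      intro a _ b _ h
      have := neg_injective h
      exact mul_right_cancel₀ (ne_of_gt hcpos) this
  have hSnull : (volume.prod volume) S = 0 := by
    rw [MeasureTheory.Measure.prod_apply_symm hSmeas]
    have : ∀ x : EuclideanSpace ℝ (Fin m),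
        volume ((fun δ : ℝ => (δ, x)) ⁻¹' S) = 0 := by
      intro x; exact hsec x
    simp only [this, lintegral_zero]
  rw [MeasureTheory.Measure.measure_prod_null hSmeas] at hSnull
  rw [Filter.EventuallyEq, ae_iff] at hSnull
  simp only [Pi.zero_apply] at hSnull
  refine ⟨{δ : ℝ | volume {x : EuclideanSpace ℝ (Fin m) |
      ∇ f x ≠ 0 ∧ ¬ IsUnit (A x δ)} ≠ 0}, ?_, ?_⟩
  · refine measure_mono_null ?_ hSnull
    intro δ hδ
    simp only [Set.mem_setOf_eq] at hδ ⊢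
    exact fun h => hδ h
  · intro δ hδ
    simpa using hδ
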